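/- Let n ∈ ℕ, a ∈ C¹([0,1]) with a > 0, and f ∈ C¹([0,∞)) satisfy (f_eq) and (f_sgn). If u ∈ C²([0,1]) satisfies −(φ_n(u'))' = a(x) f̂(u) in (0,1) and u'(0) = u'(1) = 0, then either u is constant, identically equal to −C for some C ≥ 0, or u(x) > 0 for every x ∈ [0,1]. -/

import Mathlib

open Set MeasureTheory Filter Topology

noncomputable section

/-- `φ(s) = s / √(1+s²)`. -/
def phi (s : ℝ) : ℝ := s / Real.sqrt (1 + s ^ 2)

/-- `φ'(s) = (1+s²)^(-3/2)`. -/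
def phiD (s : ℝ) : ℝ := 1 / (Real.sqrt (1 + s ^ 2)) ^ 3

/-- the inverse of `φ`, a bijection of `(-1,1)` onto `ℝ`. -/
def phiInv (y : ℝ) : ℝ := y / Real.sqrt (1 - y ^ 2)

/-- the approximation `φₙ`: equal to `φ` on `[-n,n]`, affine outside. -/
def phiN (n : ℕ) (s : ℝ) : ℝ :=
  if (n : ℝ) < s then phi n + phiD n * (s - n)
  else if s < -(n : ℝ) then -phi n + phiD n * (s + n)
  else phi s

/-- `Φ(s) = √(1+s²) - 1`. -/
def PhiBig (s : ℝ) : ℝ := Real.sqrt (1 + s ^ 2) - 1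

/-- `Φₙ(s) = ∫₀ˢ φₙ`. -/
def PhiNBig (n : ℕ) (s : ℝ) : ℝ := ∫ t in (0:ℝ)..s, phiN n t

/-- the extension `f̂` of `f` vanishing on the negatives. -/
def fhat (f : ℝ → ℝ) (s : ℝ) : ℝ := if s < 0 then 0 else f s

/-- `F(s) = ∫_{u0}^s f`. -/
def Fprim (f : ℝ → ℝ) (u0 s : ℝ) : ℝ := ∫ t in u0..s, f t

/-- assumption `(f_eq)`. -/
def Feq (f : ℝ → ℝ) (u0 : ℝ) : Prop := f 0 = 0 ∧ f u0 = 0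

/-- assumption `(f_sgn)`. -/
def Fsgn (f : ℝ → ℝ) (u0 : ℝ) : Prop :=
  (∀ s, 0 < s → s < u0 → f s < 0) ∧ (∀ s, u0 < s → 0 < f s)

/-- the constant `C_a`. -/
def Ca (a : ℝ → ℝ) : ℝ :=
  max ((a 1 / a 0) * Real.exp (∫ x in (0:ℝ)..1, max (-deriv a x) 0 / a x))
      ((a 0 / a 1) * Real.exp (∫ x in (0:ℝ)..1, max (deriv a x) 0 / a x))

/-- assumption `(f_ap)`, with the value `ū` made explicit. -/
def Fap (a f : ℝ → ℝ) (u0 ubar : ℝ) : Prop :=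
  u0 < ubar ∧ (∫ s in u0..ubar, f s) = Ca a * ∫ s in u0..(0:ℝ), f s

/-- assumption `(f_ap)'`. -/
def Fap' (a f : ℝ → ℝ) : Prop :=
  (∫ x in (0:ℝ)..1, a x) * sSup ((fun s => max (-f s) 0) '' Ici 0) < 1

/-- classical solution of the approximated Neumann problem `(Pₙ)`. -/
def IsPnSol (a f : ℝ → ℝ) (n : ℕ) (u : ℝ → ℝ) : Prop :=
  ContDiff ℝ 2 u ∧ (∀ x ∈ Ioo (0:ℝ) 1, 0 < u x) ∧
  deriv u 0 = 0 ∧ deriv u 1 = 0 ∧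
  ∀ x ∈ Ioo (0:ℝ) 1, -deriv (fun y => phiN n (deriv u y)) x = a x * f (u x)

/-- classical solution of the prescribed mean curvature Neumann problem `(P)`. -/
def IsPSol (a f : ℝ → ℝ) (u : ℝ → ℝ) : Prop :=
  ContDiff ℝ 2 u ∧ (∀ x ∈ Ioo (0:ℝ) 1, 0 < u x) ∧
  deriv u 0 = 0 ∧ deriv u 1 = 0 ∧
  ∀ x ∈ Ioo (0:ℝ) 1, -deriv (fun y => phi (deriv u y)) x = a x * f (u x)

/-- solution of the Cauchy problem with initial datum `d`. -/
def IsCauchySol (a f : ℝ → ℝ) (n : ℕ) (d : ℝ) (u : ℝ → ℝ) : Prop :=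
  ContDiff ℝ 2 u ∧ u 0 = d ∧ deriv u 0 = 0 ∧
  ∀ x ∈ Ioo (0:ℝ) 1, -deriv (fun y => phiN n (deriv u y)) x = a x * fhat f (u x)

/-- `θ` is a (clockwise) angular variable for `(u - u0, φₙ(u'))` around `(u0,0)`. -/
def IsAngle (n : ℕ) (u0 : ℝ) (u θ : ℝ → ℝ) : Prop :=
  ContinuousOn θ (Icc 0 1) ∧
  ∀ x ∈ Icc (0:ℝ) 1,
    u x - u0 = Real.sqrt ((u x - u0) ^ 2 + phiN n (deriv u x) ^ 2) * Real.cos (θ x) ∧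
    phiN n (deriv u x) = -(Real.sqrt ((u x - u0) ^ 2 + phiN n (deriv u x) ^ 2) * Real.sin (θ x))

/-- non-constant on `(0,1)`. -/
def Nonconstant (u : ℝ → ℝ) : Prop := ∃ x ∈ Ioo (0:ℝ) 1, ∃ y ∈ Ioo (0:ℝ) 1, u x ≠ u y

/-- the set of points of `(0,1)` where `u` takes the value `u0`. -/
def zeroSet (u : ℝ → ℝ) (u0 : ℝ) : Set ℝ := {x | x ∈ Ioo (0:ℝ) 1 ∧ u x = u0}

/-- the hypothesis `f'(u0) > λ_{k+1}`: there is `λ̄ < f'(u0)` admitting a nontrivial Neumann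
eigenfunction of `-w'' = λ̄ a w` with exactly `k` zeros in `(0,1)`. -/
def EigenHyp (a f : ℝ → ℝ) (u0 : ℝ) (k : ℕ) : Prop :=
  ∃ lam : ℝ, ∃ w : ℝ → ℝ, lam < deriv f u0 ∧ ContDiff ℝ 2 w ∧
    (∃ x ∈ Icc (0:ℝ) 1, w x ≠ 0) ∧
    (∀ x ∈ Ioo (0:ℝ) 1, -deriv (deriv w) x = lam * a x * w x) ∧
    deriv w 0 = 0 ∧ deriv w 1 = 0 ∧ (zeroSet w 0).ncard = k

/-- the functional `J(v) = ∫₀¹ √(1+|Dv|²)`. -/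
def Jfun (v : ℝ → ℝ) : ℝ :=
  sSup { r : ℝ | ∃ w₁ w₂ : ℝ → ℝ, ContDiff ℝ 1 w₁ ∧ ContDiff ℝ 1 w₂ ∧
    tsupport w₁ ⊆ Ioo 0 1 ∧ tsupport w₂ ⊆ Ioo 0 1 ∧
    (∀ x, w₁ x ^ 2 + w₂ x ^ 2 ≤ 1) ∧
    r = ∫ x in Ioo (0:ℝ) 1, (v x * deriv w₁ x + w₂ x) }

/-- BV-solution of the Neumann problem `(P)`. -/
def IsBVSol (a f : ℝ → ℝ) (u : ℝ → ℝ) : Prop :=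
  BoundedVariationOn u (Ioo 0 1) ∧ (∀ x ∈ Ioo (0:ℝ) 1, 0 ≤ u x) ∧
  ∀ v : ℝ → ℝ, BoundedVariationOn v (Ioo 0 1) →
    Jfun u + ∫ x in Ioo (0:ℝ) 1, a x * f (u x) * (v x - u x) ≤ Jfun v

/-- `u - u0` changes sign at `z`. -/
def ChangesSign (u : ℝ → ℝ) (u0 z : ℝ) : Prop :=
  ∃ δ > (0:ℝ), ((∀ x ∈ Ioo (z - δ) z, u x < u0) ∧ (∀ x ∈ Ioo z (z + δ), u0 < u x)) ∨
           ((∀ x ∈ Ioo (z - δ) z, u0 < u x) ∧ (∀ x ∈ Ioo z (z + δ), u x < u0))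

/-- the energy `Eₙ` along a solution of `(Pₙ)`. -/
def EnergyN (a f : ℝ → ℝ) (u0 : ℝ) (n : ℕ) (u : ℝ → ℝ) (x : ℝ) : ℝ :=
  deriv u x * phiN n (deriv u x) - PhiNBig n (deriv u x) + a x * Fprim f u0 (u x)

/-- the energy `ℰ` of `u` extends to a continuous function on `[0,1]`. -/
def HasContinuousEnergy (a f : ℝ → ℝ) (u0 : ℝ) (u : ℝ → ℝ) : Prop :=
  ∃ E : ℝ → ℝ, ContinuousOn E (Icc 0 1) ∧
    ∀ x ∈ Ioo (0:ℝ) 1, ContinuousAt u x →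
      (DifferentiableAt ℝ u x →
        E x = 1 - 1 / Real.sqrt (1 + deriv u x ^ 2) + a x * Fprim f u0 (u x)) ∧
      (¬ DifferentiableAt ℝ u x → E x = 1 + a x * Fprim f u0 (u x))

/-- the oscillatory structure of the BV-solutions of Theorem 1.1: `m` generalized
intersections with `u0`, with starting sign `σ` (`σ = 1` for case (I), `σ = -1` for case (II)). -/
def OscStructure (u0 : ℝ) (u : ℝ → ℝ) (m : ℕ) (σ : ℝ) : Prop :=
  ∃ x : ℕ → ℝ,
    x 0 = 0 ∧ x (m + 1) = 1 ∧ (∀ i ≤ m, x i < x (i + 1)) ∧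
    ContDiffOn ℝ 2 u (Ico 0 (x 1)) ∧ ContDiffOn ℝ 2 u (Ioc (x m) 1) ∧
    (∀ i, 1 ≤ i → i + 1 ≤ m → ContDiffOn ℝ 2 u (Ioo (x i) (x (i + 1)))) ∧
    derivWithin u (Icc 0 1) 0 = 0 ∧ derivWithin u (Icc 0 1) 1 = 0 ∧
    (∀ i ≤ m, ∀ y ∈ Ioo (x i) (x (i + 1)), 0 < σ * (-1 : ℝ) ^ (i + 1) * (u y - u0)) ∧
    ∀ i, 1 ≤ i → i ≤ m →
      (u (x i) = u0 ∧ ContDiffOn ℝ 2 u (Ioo (x (i - 1)) (x (i + 1)))) ∨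
      (∃ L R : ℝ, Tendsto u (𝓝[<] x i) (𝓝 L) ∧ Tendsto u (𝓝[>] x i) (𝓝 R) ∧
        (0 < σ * (-1 : ℝ) ^ (i + 1) →
          L ≤ u0 ∧ u0 ≤ R ∧ Tendsto (deriv u) (𝓝[<] x i) atTop ∧
            Tendsto (deriv u) (𝓝[>] x i) atTop) ∧
        (σ * (-1 : ℝ) ^ (i + 1) < 0 →
          R ≤ u0 ∧ u0 ≤ L ∧ Tendsto (deriv u) (𝓝[<] x i) atBot ∧
            Tendsto (deriv u) (𝓝[>] x i) atBot))
section Aux5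

lemma sqrtq_pos (s : ℝ) : 0 < Real.sqrt (1 + s ^ 2) := Real.sqrt_pos.mpr (by positivity)

lemma sqrtq_sq (s : ℝ) : Real.sqrt (1 + s ^ 2) ^ 2 = 1 + s ^ 2 := Real.sq_sqrt (by positivity)

lemma one_le_sqrtq (s : ℝ) : 1 ≤ Real.sqrt (1 + s ^ 2) := by
  nlinarith [sqrtq_pos s, sqrtq_sq s, sq_nonneg s, sq_nonneg (Real.sqrt (1 + s ^ 2) - 1)]

lemma phi_zero' : phi 0 = 0 := by simp [phi]

lemma phiD_pos (s : ℝ) : 0 < phiD s := by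
  have := sqrtq_pos s
  unfold phiD
  positivity

lemma phi_odd (s : ℝ) : phi (-s) = - phi s := by
  unfold phi; rw [neg_sq, neg_div]

lemma phiD_even (s : ℝ) : phiD (-s) = phiD s := by
  unfold phiD; rw [neg_sq]

lemma phi_hasDeriv (s : ℝ) : HasDerivAt phi (phiD s) s := by
  have h1 : HasDerivAt (fun t : ℝ => 1 + t ^ 2) (2 * s) s := by
    simpa using (hasDerivAt_pow 2 s).const_add 1
  have h2 : HasDerivAt (fun t : ℝ => Real.sqrt (1 + t ^ 2))
      (2 * s / (2 * Real.sqrt (1 + s ^ 2))) s := h1.sqrt (by positivity)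
  have h3 := (hasDerivAt_id s).div h2 (sqrtq_pos s).ne'
  convert (show HasDerivAt phi _ s from h3) using 1
  have hr := sqrtq_pos s
  have hr2 := sqrtq_sq s
  unfold phiD
  simp only [id]
  field_simp
  linear_combination -hr2

lemma phiN_eq_phi {n : ℕ} {s : ℝ} (h1 : -(n:ℝ) ≤ s) (h2 : s ≤ (n:ℝ)) : phiN n s = phi s := by
  unfold phiN
  rw [if_neg (by linarith), if_neg (by linarith)]

lemma phiN_zero_eq (n : ℕ) : phiN n 0 = 0 := by
  have hn : (0:ℝ) ≤ (n:ℝ) := Nat.cast_nonneg n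
  rw [phiN_eq_phi (by linarith) hn, phi_zero']

lemma phiN_odd (n : ℕ) (s : ℝ) : phiN n (-s) = - phiN n s := by
  have hn : (0:ℝ) ≤ (n:ℝ) := Nat.cast_nonneg n
  unfold phiN
  split_ifs with h1 h2 h3 h4 h5 <;>
    first
      | (exfalso; linarith)
      | (rw [phi_odd])
      | ring1
      | (rw [phi_odd]; ring1)

lemma phiN_zero_fun : phiN 0 = fun s => s := by
  funext s
  unfold phiN
  have h0 : phi 0 = 0 := phi_zero'
  have hD : phiD 0 = 1 := by unfold phiD; simp
  simp only [Nat.cast_zero]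
  split_ifs with h1 h2
  · rw [h0, hD]; ring
  · rw [h0, hD]; ring
  · have : s = 0 := le_antisymm (not_lt.mp h1) (by linarith [not_lt.mp h2])
    rw [this, h0]

lemma phiN_lower {n : ℕ} {s : ℝ} (hs : 0 ≤ s) : phiD n * s ≤ phiN n s := by
  have hn : (0:ℝ) ≤ (n:ℝ) := Nat.cast_nonneg n
  have hr : 0 < Real.sqrt (1 + (n:ℝ) ^ 2) := sqrtq_pos n
  have hr2 := sqrtq_sq (n:ℝ)
  have hr1 := one_le_sqrtq (n:ℝ)
  unfold phiN
  split_ifs with h1 h2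
  · have h3 : (Real.sqrt (1 + (n:ℝ) ^ 2)) ^ 3 = (1 + (n:ℝ) ^ 2) * Real.sqrt (1 + (n:ℝ) ^ 2) := by
      rw [pow_succ, hr2]
    have key : phiD (n:ℝ) * (n:ℝ) ≤ phi (n:ℝ) := by
      unfold phi phiD
      rw [div_mul_eq_mul_div, div_le_div_iff₀ (by positivity) hr, h3]
      nlinarith [mul_nonneg (mul_nonneg hn (sq_nonneg (n:ℝ))) hr.le]
    nlinarith [key]
  · exfalso; linarith
  · have hsn : s ≤ (n:ℝ) := not_lt.mp h1
    have hrs : Real.sqrt (1 + s ^ 2) ≤ Real.sqrt (1 + (n:ℝ) ^ 2) :=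
      Real.sqrt_le_sqrt (by nlinarith)
    have hrs0 : 0 < Real.sqrt (1 + s ^ 2) := sqrtq_pos s
    have h3 : (Real.sqrt (1 + (n:ℝ) ^ 2)) ^ 3 = (1 + (n:ℝ) ^ 2) * Real.sqrt (1 + (n:ℝ) ^ 2) := by
      rw [pow_succ, hr2]
    unfold phi phiD
    rw [div_mul_eq_mul_div, div_le_div_iff₀ (by positivity) hrs0, h3]
    nlinarith [mul_le_mul_of_nonneg_left hrs hs,
      mul_nonneg (mul_nonneg hs (sq_nonneg (n:ℝ))) hr.le]

lemma abs_le_phiN (n : ℕ) (s : ℝ) : phiD n * |s| ≤ |phiN n s| := by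
  rcases le_or_gt 0 s with hs | hs
  · have h := phiN_lower (n := n) hs
    rw [abs_of_nonneg hs, abs_of_nonneg (le_trans (mul_nonneg (phiD_pos _).le hs) h)]
    exact h
  · have hs' : 0 ≤ -s := by linarith
    have h := phiN_lower (n := n) hs'
    rw [phiN_odd] at h
    have hnn : phiN n s ≤ 0 := by nlinarith [mul_nonneg (phiD_pos (n:ℝ)).le hs']
    rw [abs_of_neg hs, abs_of_nonpos hnn]
    linarith

lemma differentiableAt_phiN (n : ℕ) (s : ℝ) : DifferentiableAt ℝ (phiN n) s := by
  rcases Nat.eq_zero_or_pos n with hn | hn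
  · subst hn; rw [phiN_zero_fun]; exact differentiableAt_id
  have hn' : (0:ℝ) < (n:ℝ) := by exact_mod_cast hn
  have hlinR : ∀ t : ℝ, HasDerivAt (fun t : ℝ => phi (n:ℝ) + phiD (n:ℝ) * (t - (n:ℝ))) (phiD (n:ℝ)) t := by
    intro t
    simpa using (((hasDerivAt_id t).sub_const ((n:ℝ))).const_mul (phiD (n:ℝ))).const_add (phi (n:ℝ))
  -- first: differentiability at nonnegative points
  have main : ∀ s : ℝ, 0 ≤ s → DifferentiableAt ℝ (phiN n) s := by
    intro s hs
    rcases lt_trichotomy s (n:ℝ) with hlt | heq | hgt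
    · have hev : phiN n =ᶠ[𝓝 s] phi := by
        filter_upwards [Ioo_mem_nhds (by linarith : -(n:ℝ) < s) hlt] with t ht
        exact phiN_eq_phi ht.1.le ht.2.le
      exact ((phi_hasDeriv s).congr_of_eventuallyEq hev).differentiableAt
    · subst heq
      have hIic : HasDerivWithinAt (phiN n) (phiD (n:ℝ)) (Iic (n:ℝ)) (n:ℝ) := by
        refine ((phi_hasDeriv (n:ℝ)).hasDerivWithinAt).congr_of_eventuallyEq ?_ ?_
        · filter_upwards [self_mem_nhdsWithin,
            mem_nhdsWithin_of_mem_nhds (Ioi_mem_nhds (by linarith : -(n:ℝ) < (n:ℝ)))] with t ht1 ht2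
          exact phiN_eq_phi (le_of_lt ht2) ht1
        · exact phiN_eq_phi (by linarith) le_rfl
      have hIci : HasDerivWithinAt (phiN n) (phiD (n:ℝ)) (Ici (n:ℝ)) (n:ℝ) := by
        refine ((hlinR (n:ℝ)).hasDerivWithinAt).congr (fun t ht => ?_) ?_
        · rcases lt_or_eq_of_le (Set.mem_Ici.mp ht) with h' | h'
          · unfold phiN; rw [if_pos h']
          · rw [← h', phiN_eq_phi (by linarith) le_rfl]; ring
        · rw [phiN_eq_phi (by linarith) le_rfl]; ring
      have := hIic.union hIci
      rw [Iic_union_Ici] at this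
      exact (hasDerivWithinAt_univ.mp this).differentiableAt
    · have hev : phiN n =ᶠ[𝓝 s] (fun t : ℝ => phi (n:ℝ) + phiD (n:ℝ) * (t - (n:ℝ))) := by
        filter_upwards [Ioi_mem_nhds hgt] with t ht
        unfold phiN; rw [if_pos (show (n:ℝ) < t from ht)]
      exact ((hlinR s).congr_of_eventuallyEq hev).differentiableAt
  rcases le_or_gt 0 s with hs | hs
  · exact main s hs
  · have hodd : phiN n = fun t => -phiN n (-t) := by
      funext t; rw [phiN_odd]; ring
    rw [hodd]
    exact ((main (-s) (by linarith)).comp s differentiableAt_id.neg).neg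

lemma continuous_phiN (n : ℕ) : Continuous (phiN n) :=
  continuous_iff_continuousAt.mpr fun s => (differentiableAt_phiN n s).continuousAt

end Aux5
set_option maxHeartbeats 1000000 in
theorem statement5 (n : ℕ) (a f : ℝ → ℝ) (u0 : ℝ)
    (ha : ContDiff ℝ 1 a) (hapos : ∀ x ∈ Icc (0:ℝ) 1, 0 < a x)
    (hf : ContDiffOn ℝ 1 f (Ici 0)) (hu0 : 0 < u0)
    (hfeq : Feq f u0) (hfsgn : Fsgn f u0)
    (u : ℝ → ℝ) (hu : ContDiff ℝ 2 u)
    (hbc0 : deriv u 0 = 0) (hbc1 : deriv u 1 = 0)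
    (hode : ∀ x ∈ Ioo (0:ℝ) 1, -deriv (fun y => phiN n (deriv u y)) x = a x * fhat f (u x)) :
    (∃ C : ℝ, 0 ≤ C ∧ ∀ x ∈ Icc (0:ℝ) 1, u x = -C) ∨ ∀ x ∈ Icc (0:ℝ) 1, 0 < u x := by
  by_cases hpos : ∀ x ∈ Icc (0:ℝ) 1, 0 < u x
  · exact Or.inr hpos
  left
  push_neg at hpos
  obtain ⟨y₀, hy₀, hy₀le⟩ := hpos
  obtain ⟨x₀, hx₀, hmin⟩ := (isCompact_Icc (a := (0:ℝ)) (b := 1)).exists_isMinOn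
    (nonempty_Icc.mpr (by norm_num)) hu.continuous.continuousOn
  set c := u x₀ with hc
  have hcle : c ≤ 0 := le_trans (hmin hy₀) hy₀le
  have hd0 : deriv u x₀ = 0 := by
    rcases eq_or_lt_of_le hx₀.1 with h0 | h0
    · rw [← h0]; exact hbc0
    rcases eq_or_lt_of_le hx₀.2 with h1 | h1
    · rw [h1]; exact hbc1
    · exact (hmin.isLocalMin (Icc_mem_nhds h0 h1)).deriv_eq_zero
  have h11 : ContDiff ℝ ((1 : WithTop ℕ∞) + 1) u := by
    have h2 : ((1 : WithTop ℕ∞) + 1) = 2 := by norm_num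
    rw [h2]; exact hu
  obtain ⟨hudiff, -, hud⟩ := contDiff_succ_iff_deriv.mp h11
  have hudc : Continuous (deriv u) := hud.continuous
  have hud1 : Differentiable ℝ (deriv u) := hud.differentiable one_ne_zero
  set w : ℝ → ℝ := fun y => phiN n (deriv u y) with hwdef
  have hwc : Continuous w := (continuous_phiN n).comp hudc
  have hw0 : w x₀ = 0 := by
    show phiN n (deriv u x₀) = 0
    rw [hd0, phiN_zero_eq]
  -- bounds
  obtain ⟨Ku, hKu⟩ := isCompact_Icc.exists_bound_of_continuousOn hu.continuous.continuousOn
  set K : ℝ := max Ku 1 with hKdef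
  have hK1 : (1:ℝ) ≤ K := le_max_right _ _
  have hKu' : ∀ x ∈ Icc (0:ℝ) 1, u x ≤ K := by
    intro x hx
    have := hKu x hx
    rw [Real.norm_eq_abs] at this
    have := le_trans (le_abs_self _) this
    exact le_trans this (le_max_left _ _)
  obtain ⟨Ma, hMa⟩ := isCompact_Icc.exists_bound_of_continuousOn
    (ha.continuous.continuousOn (s := Icc (0:ℝ) 1))
  have hMa0 : 0 ≤ Ma := le_trans (norm_nonneg _) (hMa 0 (by norm_num))
  -- Lipschitz of f on Icc 0 K
  have hfK : ContDiffOn ℝ 1 f (Icc 0 K) := hf.mono Icc_subset_Ici_self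
  have hfdiff : DifferentiableOn ℝ f (Icc 0 K) := hfK.differentiableOn one_ne_zero
  have hudK : UniqueDiffOn ℝ (Icc (0:ℝ) K) := uniqueDiffOn_Icc (by linarith)
  have hderivc : ContinuousOn (derivWithin f (Icc 0 K)) (Icc 0 K) :=
    hfK.continuousOn_derivWithin hudK le_rfl
  obtain ⟨Lf, hLf⟩ := isCompact_Icc.exists_bound_of_continuousOn hderivc
  have h0K : (0:ℝ) ∈ Icc (0:ℝ) K := ⟨le_rfl, by linarith⟩
  have hLf0 : 0 ≤ Lf := le_trans (norm_nonneg _) (hLf 0 h0K)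
  have hf00 : f 0 = 0 := hfeq.1
  have hlip : ∀ p ∈ Icc (0:ℝ) K, |f p| ≤ Lf * p := by
    intro p hp
    have h2 := Convex.norm_image_sub_le_of_norm_derivWithin_le hfdiff hLf (convex_Icc _ _) h0K hp
    rw [hf00, sub_zero, sub_zero, Real.norm_eq_abs, Real.norm_eq_abs, abs_of_nonneg hp.1] at h2
    exact h2
  have hfhat : ∀ x ∈ Icc (0:ℝ) 1, |fhat f (u x)| ≤ Lf * (u x - c) := by
    intro x hx
    have hum : c ≤ u x := hmin hx
    rcases lt_or_ge (u x) 0 with h | h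
    · rw [show fhat f (u x) = 0 from if_pos h, abs_zero]
      exact mul_nonneg hLf0 (by linarith)
    · rw [show fhat f (u x) = f (u x) from if_neg (not_lt.mpr h)]
      have h1 := hlip (u x) ⟨h, hKu' x hx⟩
      have h2 : Lf * u x ≤ Lf * (u x - c) := mul_le_mul_of_nonneg_left (by linarith) hLf0
      linarith
  -- constants
  have hφ : 0 < phiD (n:ℝ) := phiD_pos (n:ℝ)
  set L₂ : ℝ := 1 / phiD (n:ℝ) with hL₂
  have hL₂0 : 0 < L₂ := by positivity
  set L₁ : ℝ := Ma * Lf with hL₁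
  have hL₁0 : 0 ≤ L₁ := mul_nonneg hMa0 hLf0
  set CC : ℝ := L₁ + L₂ with hCC
  have hCC0 : 0 ≤ CC := by positivity
  -- derivative of w
  have hwderiv : ∀ x ∈ Ioo (0:ℝ) 1, HasDerivAt w (-(a x * fhat f (u x))) x := by
    intro x hx
    have hdiff : DifferentiableAt ℝ w x :=
      (differentiableAt_phiN n (deriv u x)).comp x (hud1 x)
    have hval : deriv w x = -(a x * fhat f (u x)) := by
      have := hode x hx; linarith
    rw [← hval]; exact hdiff.hasDerivAt
  have hhnn : ∀ t : ℝ, 0 ≤ (u t - c) ^ 2 + (w t) ^ 2 := fun t => by positivity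
  -- derivative of the energy-like function
  have hhd : ∀ x ∈ Ioo (0:ℝ) 1, HasDerivAt (fun y => (u y - c) ^ 2 + (w y) ^ 2)
      (2 * (u x - c) * deriv u x + 2 * w x * (-(a x * fhat f (u x)))) x := by
    intro x hx
    have h1 : HasDerivAt (fun y => (u y - c) ^ 2) (2 * (u x - c) * deriv u x) x := by
      have h := ((hudiff x).hasDerivAt.sub_const c).pow 2
      convert (show HasDerivAt (fun y => (u y - c) ^ 2) _ x from h) using 1
      push_cast
      ring
    have h2 : HasDerivAt (fun y => (w y) ^ 2) (2 * w x * (-(a x * fhat f (u x)))) x := by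
      have h := (hwderiv x hx).pow 2
      convert (show HasDerivAt (fun y => (w y) ^ 2) _ x from h) using 1
      push_cast
      ring
    exact h1.add h2
  -- bound on the derivative
  have hbound : ∀ x ∈ Ioo (0:ℝ) 1,
      |2 * (u x - c) * deriv u x + 2 * w x * (-(a x * fhat f (u x)))|
        ≤ CC * ((u x - c) ^ 2 + (w x) ^ 2) := by
    intro x hx
    have hx1 : x ∈ Icc (0:ℝ) 1 := Ioo_subset_Icc_self hx
    have hphiw : phiD (n:ℝ) * |deriv u x| ≤ |w x| := abs_le_phiN n (deriv u x)
    have e1 : |deriv u x| ≤ L₂ * |w x| := by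
      rw [hL₂, div_mul_eq_mul_div, le_div_iff₀ hφ]
      nlinarith [hphiw]
    have ha1 : |a x| ≤ Ma := by
      have := hMa x hx1; rwa [Real.norm_eq_abs] at this
    have hum2 : c ≤ u x := hmin hx1
    have hucnn : (0:ℝ) ≤ u x - c := by linarith
    have h2' : |fhat f (u x)| ≤ Lf * |u x - c| := by
      rw [abs_of_nonneg hucnn]
      exact hfhat x hx1
    have e2 : |a x| * |fhat f (u x)| ≤ L₁ * |u x - c| := by
      rw [hL₁, mul_assoc]
      exact mul_le_mul ha1 h2' (abs_nonneg _) hMa0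
    have t1 : |2 * (u x - c) * deriv u x + 2 * w x * (-(a x * fhat f (u x)))|
        ≤ 2 * |u x - c| * |deriv u x| + 2 * |w x| * (|a x| * |fhat f (u x)|) := by
      refine le_trans (abs_add_le _ _) ?_
      simp only [abs_mul, abs_neg, abs_two]
      exact le_of_eq (by ring)
    nlinarith [t1, mul_le_mul_of_nonneg_left e1 (abs_nonneg (u x - c)),
      mul_le_mul_of_nonneg_left e2 (abs_nonneg (w x)),
      sq_nonneg (|u x - c| - |w x|), sq_abs (u x - c), sq_abs (w x),
      abs_nonneg (w x), abs_nonneg (u x - c), hL₁0, hL₂0.le,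
      mul_nonneg (mul_nonneg hL₁0 (abs_nonneg (u x - c))) (abs_nonneg (w x)),
      mul_nonneg (mul_nonneg hL₂0.le (abs_nonneg (u x - c))) (abs_nonneg (w x))]
  -- Gronwall
  have key : ∀ x ∈ Icc (0:ℝ) 1, (u x - c) ^ 2 + (w x) ^ 2 = 0 := by
    intro x hx
    have hH0 : ((u x₀ - c) ^ 2 + (w x₀) ^ 2) = 0 := by
      rw [hw0, ← hc]
      simp
    rcases le_total x₀ x with hle | hle
    · have hA : AntitoneOn (fun t => ((u t - c) ^ 2 + (w t) ^ 2) * Real.exp (-CC * t))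
          (Icc x₀ 1) := by
        apply antitoneOn_of_deriv_nonpos (convex_Icc _ _)
        · exact ((((hu.continuous.sub continuous_const).pow 2).add (hwc.pow 2)).mul
            (Real.continuous_exp.comp (continuous_const.mul continuous_id))).continuousOn
        · intro t ht
          rw [interior_Icc] at ht
          have ht' : t ∈ Ioo (0:ℝ) 1 := ⟨lt_of_le_of_lt hx₀.1 ht.1, ht.2⟩
          have hexp : HasDerivAt (fun s => Real.exp (-CC * s)) (Real.exp (-CC * t) * (-CC)) t := by
            simpa using (((hasDerivAt_id t).const_mul (-CC)).exp)
          exact (((hhd t ht').mul hexp).differentiableAt).differentiableWithinAt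
        · intro t ht
          rw [interior_Icc] at ht
          have ht' : t ∈ Ioo (0:ℝ) 1 := ⟨lt_of_le_of_lt hx₀.1 ht.1, ht.2⟩
          have hexp : HasDerivAt (fun s => Real.exp (-CC * s)) (Real.exp (-CC * t) * (-CC)) t := by
            simpa using (((hasDerivAt_id t).const_mul (-CC)).exp)
          have hder : HasDerivAt (fun s => ((u s - c) ^ 2 + (w s) ^ 2) * Real.exp (-CC * s)) _ t :=
            (hhd t ht').mul hexp
          rw [hder.deriv]
          have hb2 := (abs_le.mp (hbound t ht')).2
          have he : (0:ℝ) < Real.exp (-CC * t) := Real.exp_pos _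
          nlinarith [mul_le_mul_of_nonneg_right hb2 he.le, mul_nonneg (hhnn t) he.le]
      have h1 : ((u x - c) ^ 2 + (w x) ^ 2) * Real.exp (-CC * x)
          ≤ ((u x₀ - c) ^ 2 + (w x₀) ^ 2) * Real.exp (-CC * x₀) :=
        hA ⟨le_rfl, hx₀.2⟩ ⟨hle, hx.2⟩ hle
      have hgx₀ : ((u x₀ - c) ^ 2 + (w x₀) ^ 2) * Real.exp (-CC * x₀) = 0 := by
        rw [hH0, zero_mul]
      rw [hgx₀] at h1
      have h2 : 0 ≤ ((u x - c) ^ 2 + (w x) ^ 2) * Real.exp (-CC * x) :=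
        mul_nonneg (hhnn x) (Real.exp_pos _).le
      have he : (0:ℝ) < Real.exp (-CC * x) := Real.exp_pos _
      nlinarith [hhnn x]
    · have hM : MonotoneOn (fun t => ((u t - c) ^ 2 + (w t) ^ 2) * Real.exp (CC * t))
          (Icc 0 x₀) := by
        apply monotoneOn_of_deriv_nonneg (convex_Icc _ _)
        · exact ((((hu.continuous.sub continuous_const).pow 2).add (hwc.pow 2)).mul
            (Real.continuous_exp.comp (continuous_const.mul continuous_id))).continuousOn
        · intro t ht
          rw [interior_Icc] at ht
          have ht' : t ∈ Ioo (0:ℝ) 1 := ⟨ht.1, lt_of_lt_of_le ht.2 hx₀.2⟩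
          have hexp : HasDerivAt (fun s => Real.exp (CC * s)) (Real.exp (CC * t) * CC) t := by
            simpa using (((hasDerivAt_id t).const_mul CC).exp)
          exact (((hhd t ht').mul hexp).differentiableAt).differentiableWithinAt
        · intro t ht
          rw [interior_Icc] at ht
          have ht' : t ∈ Ioo (0:ℝ) 1 := ⟨ht.1, lt_of_lt_of_le ht.2 hx₀.2⟩
          have hexp : HasDerivAt (fun s => Real.exp (CC * s)) (Real.exp (CC * t) * CC) t := by
            simpa using (((hasDerivAt_id t).const_mul CC).exp)
          have hder : HasDerivAt (fun s => ((u s - c) ^ 2 + (w s) ^ 2) * Real.exp (CC * s)) _ t :=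
            (hhd t ht').mul hexp
          rw [hder.deriv]
          have hb1 := (abs_le.mp (hbound t ht')).1
          have he : (0:ℝ) < Real.exp (CC * t) := Real.exp_pos _
          nlinarith [mul_le_mul_of_nonneg_right hb1 he.le, mul_nonneg (hhnn t) he.le]
      have h1 : ((u x - c) ^ 2 + (w x) ^ 2) * Real.exp (CC * x)
          ≤ ((u x₀ - c) ^ 2 + (w x₀) ^ 2) * Real.exp (CC * x₀) :=
        hM ⟨hx.1, hle⟩ ⟨hx₀.1, le_rfl⟩ hle
      have hgx₀ : ((u x₀ - c) ^ 2 + (w x₀) ^ 2) * Real.exp (CC * x₀) = 0 := by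
        rw [hH0, zero_mul]
      rw [hgx₀] at h1
      have he : (0:ℝ) < Real.exp (CC * x) := Real.exp_pos _
      nlinarith [hhnn x]
  refine ⟨-c, by linarith, fun x hx => ?_⟩
  have hk := key x hx
  have hsq : (u x - c) ^ 2 = 0 := by nlinarith [sq_nonneg (u x - c), sq_nonneg (w x)]
  have hxc : u x - c = 0 := by
    exact pow_eq_zero_iff (n := 2) (by norm_num) |>.mp hsq
  have : u x = c := by linarith
  rw [this]; ring
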